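/- Let X ∈ ℝ^{n×p}, let C_xx = Σ_{j=1}^p λⱼ uⱼuⱼᵀ be symmetric positive semidefinite with λ₁ ≥ … ≥ λ_p ≥ 0, let k < min(n,p), let (1/n)XᵀX have top-k eigenvalues λ̃₁ ≥ … ≥ λ̃_k > 0 with orthonormal eigenvectors ũᵢ, let X_{PCA,k} be the rank-k truncated SVD of X, and let E = C_xx − (1/n)XᵀX with ‖E‖_op < λ_k. Then Σ_{i=1}^k (λᵢ/(λᵢ + ‖E‖_op)) ⟨ũᵢ, uᵢ⟩² ≤ tr(((1/n)X_{PCA,k}ᵀX_{PCA,k})^† C_xx) ≤ Σ_{i=1}^k [ (λᵢ/(λᵢ − ‖E‖_op)) ⟨ũᵢ, uᵢ⟩² + Σ_{j=1, j≠i}^p (λⱼ/λ̃ᵢ) ⟨ũᵢ, uⱼ⟩² ]. -/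

import Mathlib

/- STATEMENT 9: Let X ∈ ℝ^{n×p}, C_xx = Σⱼ λⱼuⱼuⱼᵀ symmetric PSD with λ₁ ≥ … ≥ λ_p ≥ 0,
k < min(n,p), (1/n)XᵀX with top-k eigenvalues λ̃₁ ≥ … ≥ λ̃_k > 0 and orthonormal
eigenvectors ũᵢ, X_{PCA,k} the rank-k truncated SVD of X, and E = C_xx − (1/n)XᵀX with
‖E‖_op < λ_k. Then
Σ_{i=1}^k (λᵢ/(λᵢ+‖E‖_op)) ⟨ũᵢ,uᵢ⟩² ≤ tr(((1/n)X_{PCA,k}ᵀX_{PCA,k})^† C_xx)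
  ≤ Σ_{i=1}^k [ (λᵢ/(λᵢ−‖E‖_op)) ⟨ũᵢ,uᵢ⟩² + Σ_{j≠i} (λⱼ/λ̃ᵢ) ⟨ũᵢ,uⱼ⟩² ]. -/

open Matrix
open scoped BigOperators Matrix.Norms.L2Operator

/-- `P` is the Moore–Penrose pseudoinverse of `A`. -/
def IsMoorePenrose {m n : Type*} [Fintype m] [Fintype n]
    (A : Matrix m n ℝ) (P : Matrix n m ℝ) : Prop :=
  A * P * A = A ∧ P * A * P = P ∧ (A * P)ᵀ = A * P ∧ (P * A)ᵀ = P * A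

namespace PcaAux

variable {p : ℕ}

lemma vvmul (a b c d : Fin p → ℝ) :
    vecMulVec a b * vecMulVec c d = (b ⬝ᵥ c) • vecMulVec a d := by
  ext s t
  simp only [mul_apply, vecMulVec_apply, Matrix.smul_apply, smul_eq_mul, dotProduct, Finset.sum_mul]
  exact Finset.sum_congr rfl fun r _ => by ring

lemma dot_sum_right (y c : Fin p → ℝ) (w : Fin p → Fin p → ℝ) :
    y ⬝ᵥ (fun t => ∑ m, c m * w m t) = ∑ m, c m * (y ⬝ᵥ w m) := by
  simp only [dotProduct, Finset.mul_sum]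
  rw [Finset.sum_comm]
  exact Finset.sum_congr rfl fun m _ => Finset.sum_congr rfl fun t _ => by ring

lemma parseval (v : Fin p → Fin p → ℝ)
    (hv : ∀ s t, v s ⬝ᵥ v t = if s = t then (1:ℝ) else 0) (x : Fin p → ℝ) :
    ∑ j, (v j ⬝ᵥ x) ^ 2 = x ⬝ᵥ x := by
  set V : Matrix (Fin p) (Fin p) ℝ := Matrix.of v with hV
  have h1 : V * Vᵀ = 1 := by
    ext s t
    simpa [hV, mul_apply, one_apply, dotProduct] using hv s t
  have h2 : Vᵀ * V = 1 := mul_eq_one_comm.mp h1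
  have h3 : ∀ j, (V *ᵥ x) j = v j ⬝ᵥ x := fun j => rfl
  calc ∑ j, (v j ⬝ᵥ x) ^ 2 = (V *ᵥ x) ⬝ᵥ (V *ᵥ x) := by
        simp [dotProduct, h3, pow_two]
    _ = x ⬝ᵥ x := by
        rw [Matrix.dotProduct_mulVec, ← Matrix.mulVec_transpose, Matrix.mulVec_mulVec, h2,
          Matrix.one_mulVec]

lemma quad_abs_le (A : Matrix (Fin p) (Fin p) ℝ) (x : Fin p → ℝ) :
    |x ⬝ᵥ (A *ᵥ x)| ≤ ‖A‖ * (x ⬝ᵥ x) := by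
  let y : EuclideanSpace ℝ (Fin p) := WithLp.toLp 2 x
  let z : EuclideanSpace ℝ (Fin p) := (EuclideanSpace.equiv (Fin p) ℝ).symm (A *ᵥ x)
  have hnorm : ‖y‖ * ‖y‖ = x ⬝ᵥ x := by
    rw [← real_inner_self_eq_norm_mul_norm, PiLp.inner_apply]
    simp [y, PiLp.inner_apply, RCLike.inner_apply, dotProduct, pow_two]
  have hinner : x ⬝ᵥ (A *ᵥ x) = inner ℝ y z := by
    simp [y, z, PiLp.inner_apply, RCLike.inner_apply, dotProduct]
    exact Finset.sum_congr rfl fun i _ => mul_comm _ _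
  have hz : ‖z‖ ≤ ‖A‖ * ‖y‖ := Matrix.l2_opNorm_mulVec A y
  calc |x ⬝ᵥ (A *ᵥ x)| = |inner ℝ y z| := by rw [hinner]
    _ ≤ ‖y‖ * ‖z‖ := abs_real_inner_le_norm y z
    _ ≤ ‖y‖ * (‖A‖ * ‖y‖) := by
        have : (0:ℝ) ≤ ‖y‖ := norm_nonneg y
        nlinarith [norm_nonneg z]
    _ = ‖A‖ * (x ⬝ᵥ x) := by rw [← hnorm]; ring

lemma sum_mulVec' (s : Finset (Fin p)) (M : Fin p → Matrix (Fin p) (Fin p) ℝ) (x : Fin p → ℝ) :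
    (∑ j ∈ s, M j) *ᵥ x = ∑ j ∈ s, (M j) *ᵥ x := by
  ext t
  simp only [Matrix.mulVec, dotProduct, Finset.sum_apply, Matrix.sum_apply, Finset.sum_mul]
  rw [Finset.sum_comm]

lemma quadform (s : Finset (Fin p)) (f : Fin p → ℝ) (g : Fin p → Fin p → ℝ) (x : Fin p → ℝ) :
    x ⬝ᵥ ((∑ j ∈ s, f j • vecMulVec (g j) (g j)) *ᵥ x) = ∑ j ∈ s, f j * (g j ⬝ᵥ x) ^ 2 := by
  rw [sum_mulVec']
  have hsplit : x ⬝ᵥ (∑ j ∈ s, (f j • vecMulVec (g j) (g j)) *ᵥ x)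
      = ∑ j ∈ s, x ⬝ᵥ ((f j • vecMulVec (g j) (g j)) *ᵥ x) := by
    simp only [dotProduct, Finset.sum_apply, Finset.mul_sum]
    rw [Finset.sum_comm]
  rw [hsplit]
  refine Finset.sum_congr rfl fun j _ => ?_
  rw [Matrix.smul_mulVec, dotProduct_smul]
  have : (vecMulVec (g j) (g j)) *ᵥ x = (g j ⬝ᵥ x) • g j := by
    ext t
    simp only [Matrix.mulVec, dotProduct, vecMulVec_apply, Pi.smul_apply, smul_eq_mul,
      Finset.sum_mul]
    exact Finset.sum_congr rfl fun r _ => by ring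
  rw [this, dotProduct_smul, smul_eq_mul, smul_eq_mul, dotProduct_comm x (g j), pow_two]

lemma weyl_aux (i : Fin p) (a b : Fin p → ℝ) (v w : Fin p → Fin p → ℝ)
    (hv : ∀ s t, v s ⬝ᵥ v t = if s = t then (1:ℝ) else 0)
    (hw : ∀ s t, w s ⬝ᵥ w t = if s = t then (1:ℝ) else 0)
    (ha : ∀ j, i ≤ j → a j ≤ a i)
    (hb : ∀ j, j ≤ i → b i ≤ b j) :
    b i ≤ a i + ‖(∑ j, a j • vecMulVec (v j) (v j)) - (∑ j, b j • vecMulVec (w j) (w j))‖ := by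
  classical
  set A := ∑ j, a j • vecMulVec (v j) (v j) with hA
  set B := ∑ j, b j • vecMulVec (w j) (w j) with hB
  -- construct the test vector
  set N : Matrix (Fin p) (Fin p) ℝ := Matrix.of (fun j m =>
    if j < i then (if m ≤ i then v j ⬝ᵥ w m else 0)
    else if i < j then (if j = m then (1:ℝ) else 0) else 0) with hN
  have hdet : N.det = 0 := by
    apply Matrix.det_eq_zero_of_row_eq_zero i
    intro m
    simp [hN, lt_irrefl]
  obtain ⟨c, hc0, hcker⟩ := Matrix.exists_mulVec_eq_zero_iff.mpr hdet
  have hsupp : ∀ m : Fin p, i < m → c m = 0 := by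
    intro m him
    have := congrFun hcker m
    simpa [Matrix.mulVec, dotProduct, hN, not_lt_of_gt him, him,
      Finset.sum_ite_eq (Finset.univ : Finset (Fin p)) m c] using this
  have hrow : ∀ j : Fin p, j < i →
      ∑ m, (if m ≤ i then v j ⬝ᵥ w m else 0) * c m = 0 := by
    intro j hj
    have := congrFun hcker j
    simpa [Matrix.mulVec, dotProduct, hN, hj] using this
  set x : Fin p → ℝ := fun t => ∑ m, c m * w m t with hx
  have hwx : ∀ j, w j ⬝ᵥ x = c j := by
    intro j
    rw [hx, dot_sum_right]
    simp [hw, mul_ite, Finset.sum_ite_eq (Finset.univ : Finset (Fin p)) j c]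
  have hvx : ∀ j, j < i → v j ⬝ᵥ x = 0 := by
    intro j hj
    rw [hx, dot_sum_right]
    rw [← hrow j hj]
    refine Finset.sum_congr rfl fun m _ => ?_
    by_cases hm : m ≤ i
    · simp [hm, mul_comm]
    · simp [hm, hsupp m (lt_of_not_ge hm)]
  have hxx : x ⬝ᵥ x = ∑ j, (c j) ^ 2 := by
    rw [← parseval w hw x]
    exact Finset.sum_congr rfl fun j _ => by rw [hwx j]
  have hxxpos : 0 < x ⬝ᵥ x := by
    rw [hxx]
    obtain ⟨j0, hj0⟩ : ∃ j, c j ≠ 0 := Function.ne_iff.mp hc0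
    exact Finset.sum_pos' (fun j _ => sq_nonneg _)
      ⟨j0, Finset.mem_univ _, by positivity⟩
  have hBx : b i * (x ⬝ᵥ x) ≤ x ⬝ᵥ (B *ᵥ x) := by
    rw [hB, quadform, hxx, Finset.mul_sum]
    refine Finset.sum_le_sum fun j _ => ?_
    rw [hwx j]
    by_cases hj : j ≤ i
    · exact mul_le_mul_of_nonneg_right (hb j hj) (sq_nonneg _)
    · simp [hsupp j (lt_of_not_ge hj)]
  have hAx : x ⬝ᵥ (A *ᵥ x) ≤ a i * (x ⬝ᵥ x) := by
    rw [hA, quadform]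
    rw [← parseval v hv x, Finset.mul_sum]
    refine Finset.sum_le_sum fun j _ => ?_
    by_cases hj : j < i
    · simp [hvx j hj]
    · exact mul_le_mul_of_nonneg_right (ha j (le_of_not_gt hj)) (sq_nonneg _)
  have hEx : x ⬝ᵥ (B *ᵥ x) ≤ x ⬝ᵥ (A *ᵥ x) + ‖A - B‖ * (x ⬝ᵥ x) := by
    have h1 : x ⬝ᵥ ((A - B) *ᵥ x) = x ⬝ᵥ (A *ᵥ x) - x ⬝ᵥ (B *ᵥ x) := by
      rw [Matrix.sub_mulVec, dotProduct_sub]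
    have h2 := quad_abs_le (A - B) x
    have h3 := neg_abs_le (x ⬝ᵥ ((A - B) *ᵥ x))
    linarith
  have : b i * (x ⬝ᵥ x) ≤ (a i + ‖A - B‖) * (x ⬝ᵥ x) := by
    calc b i * (x ⬝ᵥ x) ≤ x ⬝ᵥ (B *ᵥ x) := hBx
      _ ≤ x ⬝ᵥ (A *ᵥ x) + ‖A - B‖ * (x ⬝ᵥ x) := hEx
      _ ≤ a i * (x ⬝ᵥ x) + ‖A - B‖ * (x ⬝ᵥ x) := by linarith
      _ = (a i + ‖A - B‖) * (x ⬝ᵥ x) := by ring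
  exact le_of_mul_le_mul_right this hxxpos


lemma vv_transpose (a b : Fin p → ℝ) : (vecMulVec a b)ᵀ = vecMulVec b a := by
  ext s t; simp [vecMulVec_apply, mul_comm]

lemma trace_vv (a b : Fin p → ℝ) : trace (vecMulVec a b) = a ⬝ᵥ b := by
  simp [Matrix.trace, Matrix.diag, vecMulVec_apply, dotProduct]

lemma sum_vv_mul (F : Finset (Fin p)) (d e : Fin p → ℝ) (w : Fin p → Fin p → ℝ)
    (hw : ∀ s t, w s ⬝ᵥ w t = if s = t then (1:ℝ) else 0) :
    (∑ i ∈ F, d i • vecMulVec (w i) (w i)) * (∑ j ∈ F, e j • vecMulVec (w j) (w j))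
      = ∑ i ∈ F, (d i * e i) • vecMulVec (w i) (w i) := by
  rw [Finset.sum_mul]
  refine Finset.sum_congr rfl fun i hi => ?_
  rw [Finset.mul_sum]
  have key : ∀ j, (d i • vecMulVec (w i) (w i)) * (e j • vecMulVec (w j) (w j))
      = (if i = j then (d i * e j) else 0) • vecMulVec (w i) (w j) := by
    intro j
    rw [Matrix.smul_mul, Matrix.mul_smul, vvmul, hw, smul_smul, smul_smul]
    by_cases h : i = j <;> simp [h, mul_comm]
  simp only [key, ite_smul, zero_smul]
  rw [Finset.sum_ite_eq F i (fun j => (d i * e j) • vecMulVec (w i) (w j)), if_pos hi]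


lemma mp_unique {m n : Type*} [Fintype m] [Fintype n]
    (A : Matrix m n ℝ) (P Q : Matrix n m ℝ)
    (hP : IsMoorePenrose A P) (hQ : IsMoorePenrose A Q) : P = Q := by
  obtain ⟨hP1, hP2, hP3, hP4⟩ := hP
  obtain ⟨hQ1, hQ2, hQ3, hQ4⟩ := hQ
  have hAP : A * P = A * Q := by
    have h5 : Aᵀ * Qᵀ * Aᵀ = Aᵀ := by
      calc Aᵀ * Qᵀ * Aᵀ = (A * (Q * A))ᵀ := by
            rw [Matrix.transpose_mul, Matrix.transpose_mul]
        _ = Aᵀ := by rw [← Matrix.mul_assoc, hQ1]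
    have e1 : (A * P) * (A * Q) = A * Q := by rw [← Matrix.mul_assoc (A * P) A Q, hP1]
    have e2 : (A * P) * (A * Q) = A * P := by
      calc (A * P) * (A * Q) = (A * P)ᵀ * (A * Q)ᵀ := by rw [hP3, hQ3]
        _ = (Pᵀ * Aᵀ) * (Qᵀ * Aᵀ) := by rw [Matrix.transpose_mul, Matrix.transpose_mul]
        _ = Pᵀ * (Aᵀ * Qᵀ * Aᵀ) := by
            rw [Matrix.mul_assoc Pᵀ Aᵀ (Qᵀ * Aᵀ), Matrix.mul_assoc Aᵀ Qᵀ Aᵀ]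
        _ = Pᵀ * Aᵀ := by rw [h5]
        _ = (A * P)ᵀ := (Matrix.transpose_mul A P).symm
        _ = A * P := hP3
    rw [← e2, e1]
  have hPA : P * A = Q * A := by
    have h5 : Aᵀ * Pᵀ * Aᵀ = Aᵀ := by
      calc Aᵀ * Pᵀ * Aᵀ = (A * (P * A))ᵀ := by
            rw [Matrix.transpose_mul, Matrix.transpose_mul]
        _ = Aᵀ := by rw [← Matrix.mul_assoc, hP1]
    have e1 : (P * A) * (Q * A) = P * A := by
      rw [Matrix.mul_assoc P A (Q * A), ← Matrix.mul_assoc A Q A, hQ1]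
    have e2 : (P * A) * (Q * A) = Q * A := by
      calc (P * A) * (Q * A) = (P * A)ᵀ * (Q * A)ᵀ := by rw [hP4, hQ4]
        _ = (Aᵀ * Pᵀ) * (Aᵀ * Qᵀ) := by rw [Matrix.transpose_mul, Matrix.transpose_mul]
        _ = (Aᵀ * Pᵀ * Aᵀ) * Qᵀ := by
            rw [Matrix.mul_assoc (Aᵀ * Pᵀ) Aᵀ Qᵀ]
        _ = Aᵀ * Qᵀ := by rw [h5]
        _ = (Q * A)ᵀ := (Matrix.transpose_mul Q A).symm
        _ = Q * A := hQ4
    rw [← e1, e2]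
  calc P = P * A * P := hP2.symm
    _ = P * (A * Q) := by rw [Matrix.mul_assoc, hAP]
    _ = (Q * A) * Q := by rw [← Matrix.mul_assoc, hPA]
    _ = Q := hQ2

lemma mp_of_orth (F : Finset (Fin p)) (d : Fin p → ℝ) (w : Fin p → Fin p → ℝ)
    (hw : ∀ s t, w s ⬝ᵥ w t = if s = t then (1:ℝ) else 0)
    (hd : ∀ i ∈ F, d i ≠ 0) :
    IsMoorePenrose (∑ i ∈ F, d i • vecMulVec (w i) (w i))
      (∑ i ∈ F, (d i)⁻¹ • vecMulVec (w i) (w i)) := by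
  set B := ∑ i ∈ F, d i • vecMulVec (w i) (w i) with hBdef
  set P := ∑ i ∈ F, (d i)⁻¹ • vecMulVec (w i) (w i) with hPdef
  set Pr := ∑ i ∈ F, vecMulVec (w i) (w i) with hPrdef
  have hBP : B * P = Pr := by
    rw [hBdef, hPdef, sum_vv_mul F d (fun i => (d i)⁻¹) w hw]
    exact Finset.sum_congr rfl fun i hi => by rw [mul_inv_cancel₀ (hd i hi), one_smul]
  have hPB : P * B = Pr := by
    rw [hBdef, hPdef, sum_vv_mul F (fun i => (d i)⁻¹) d w hw]
    exact Finset.sum_congr rfl fun i hi => by rw [inv_mul_cancel₀ (hd i hi), one_smul]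
  have hPrB : Pr * B = B := by
    have h := sum_vv_mul F (fun _ => (1:ℝ)) d w hw
    simpa using h
  have hPrP : Pr * P = P := by
    have h := sum_vv_mul F (fun _ => (1:ℝ)) (fun i => (d i)⁻¹) w hw
    simpa using h
  have hPrT : Prᵀ = Pr := by
    rw [hPrdef, Matrix.transpose_sum]
    exact Finset.sum_congr rfl fun i _ => vv_transpose (w i) (w i)
  exact ⟨by rw [hBP, hPrB], by rw [hPB, hPrP], by rw [hBP, hPrT],
    by rw [hPB, hPrT]⟩

end PcaAux

theorem pca_ols_variance_trace_sandwich
    (n p k : ℕ) (hn : 0 < n) (hk0 : 0 < k) (hk : k < min n p)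
    (X : Matrix (Fin n) (Fin p) ℝ)
    (Cxx : Matrix (Fin p) (Fin p) ℝ)
    -- eigendecomposition of the population covariance, eigenvalues sorted decreasingly
    (lam : Fin p → ℝ) (u : Fin p → Fin p → ℝ)
    (hlam_anti : ∀ i j : Fin p, i ≤ j → lam j ≤ lam i)
    (hlam_nonneg : ∀ j, 0 ≤ lam j)
    (hu_orth : ∀ i j, u i ⬝ᵥ u j = if i = j then (1 : ℝ) else 0)
    (hCxx : Cxx = ∑ j, lam j • vecMulVec (u j) (u j))
    -- eigendecomposition of the empirical covariance (1/n) XᵀX, with positive top-k eigenvalues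
    (lamt : Fin p → ℝ) (ut : Fin p → Fin p → ℝ)
    (hlamt_anti : ∀ i j : Fin p, i ≤ j → lamt j ≤ lamt i)
    (hlamt_pos : ∀ i : Fin p, (i : ℕ) < k → 0 < lamt i)
    (hut_orth : ∀ i j, ut i ⬝ᵥ ut j = if i = j then (1 : ℝ) else 0)
    (hemp : (1 / (n : ℝ)) • (Xᵀ * X) = ∑ j, lamt j • vecMulVec (ut j) (ut j))
    -- the rank-k truncated SVD of X and the pseudoinverse of (1/n) X_{PCA,k}ᵀ X_{PCA,k}
    (Xk : Matrix (Fin n) (Fin p) ℝ)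
    (hXk : (1 / (n : ℝ)) • (Xkᵀ * Xk)
      = ∑ i ∈ Finset.univ.filter (fun i : Fin p => (i : ℕ) < k), lamt i • vecMulVec (ut i) (ut i))
    (Bdag : Matrix (Fin p) (Fin p) ℝ)
    (hBdag : IsMoorePenrose ((1 / (n : ℝ)) • (Xkᵀ * Xk)) Bdag)
    -- the perturbation and the spectral condition
    (E : Matrix (Fin p) (Fin p) ℝ)
    (hE : E = Cxx - (1 / (n : ℝ)) • (Xᵀ * X))
    (hEk : ‖E‖ < lam ⟨k - 1, by omega⟩) :
    (∑ i ∈ Finset.univ.filter (fun i : Fin p => (i : ℕ) < k),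
        (lam i / (lam i + ‖E‖)) * (ut i ⬝ᵥ u i) ^ 2)
      ≤ Matrix.trace (Bdag * Cxx) ∧
    Matrix.trace (Bdag * Cxx)
      ≤ ∑ i ∈ Finset.univ.filter (fun i : Fin p => (i : ℕ) < k),
          ((lam i / (lam i - ‖E‖)) * (ut i ⬝ᵥ u i) ^ 2
            + ∑ j ∈ Finset.univ.filter (fun j : Fin p => j ≠ i),
                (lam j / lamt i) * (ut i ⬝ᵥ u j) ^ 2) := by
  classical
  have hkp : k - 1 < p := by omega
  set F := Finset.univ.filter (fun i : Fin p => (i : ℕ) < k) with hF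
  have hEnn : (0:ℝ) ≤ ‖E‖ := norm_nonneg E
  have hmemk : ∀ i ∈ F, (i : ℕ) < k := fun i hi => (Finset.mem_filter.mp hi).2
  have hlami : ∀ i ∈ F, ‖E‖ < lam i := by
    intro i hi
    refine lt_of_lt_of_le hEk (hlam_anti i ⟨k - 1, hkp⟩ ?_)
    have := hmemk i hi
    rw [Fin.le_def]
    simpa using by omega
  have hEmat : E = (∑ j, lam j • vecMulVec (u j) (u j))
      - (∑ j, lamt j • vecMulVec (ut j) (ut j)) := by
    rw [hE, hCxx, hemp]
  have hW1 : ∀ i ∈ F, lamt i ≤ lam i + ‖E‖ := by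
    intro i _
    have h := PcaAux.weyl_aux i lam lamt u ut hu_orth hut_orth
      (fun j hj => hlam_anti i j hj) (fun j hj => hlamt_anti j i hj)
    rwa [← hEmat] at h
  have hW2 : ∀ i ∈ F, lam i - ‖E‖ ≤ lamt i := by
    intro i _
    have h := PcaAux.weyl_aux i lamt lam ut u hut_orth hu_orth
      (fun j hj => hlamt_anti i j hj) (fun j hj => hlam_anti j i hj)
    have hneg : (∑ j, lamt j • vecMulVec (ut j) (ut j))
        - (∑ j, lam j • vecMulVec (u j) (u j)) = -E := by
      rw [hEmat]; abel
    rw [hneg, norm_neg] at h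
    linarith
  have hBd : Bdag = ∑ i ∈ F, (lamt i)⁻¹ • vecMulVec (ut i) (ut i) := by
    refine PcaAux.mp_unique ((1 / (n : ℝ)) • (Xkᵀ * Xk)) _ _ hBdag ?_
    rw [hXk]
    exact PcaAux.mp_of_orth F lamt ut hut_orth
      (fun i hi => ne_of_gt (hlamt_pos i (hmemk i hi)))
  have htr : Matrix.trace (Bdag * Cxx)
      = ∑ i ∈ F, ∑ j, (lam j / lamt i) * (ut i ⬝ᵥ u j) ^ 2 := by
    rw [hBd, hCxx, Finset.sum_mul, Matrix.trace_sum]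
    refine Finset.sum_congr rfl fun i hi => ?_
    rw [Finset.mul_sum, Matrix.trace_sum]
    refine Finset.sum_congr rfl fun j _ => ?_
    rw [Matrix.smul_mul, Matrix.mul_smul, PcaAux.vvmul, Matrix.trace_smul, Matrix.trace_smul,
      Matrix.trace_smul, PcaAux.trace_vv]
    simp only [smul_eq_mul]
    rw [div_eq_mul_inv, pow_two]
    ring
  constructor
  · rw [htr]
    refine Finset.sum_le_sum fun i hi => ?_
    have hti := hlamt_pos i (hmemk i hi)
    calc (lam i / (lam i + ‖E‖)) * (ut i ⬝ᵥ u i) ^ 2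
        ≤ (lam i / lamt i) * (ut i ⬝ᵥ u i) ^ 2 := by
          refine mul_le_mul_of_nonneg_right ?_ (sq_nonneg _)
          exact div_le_div_of_nonneg_left (hlam_nonneg i) hti (hW1 i hi)
      _ ≤ ∑ j, (lam j / lamt i) * (ut i ⬝ᵥ u j) ^ 2 :=
          Finset.single_le_sum
            (f := fun j => (lam j / lamt i) * (ut i ⬝ᵥ u j) ^ 2)
            (fun j _ => mul_nonneg (div_nonneg (hlam_nonneg j) hti.le) (sq_nonneg _))
            (Finset.mem_univ i)
  · rw [htr]
    refine Finset.sum_le_sum fun i hi => ?_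
    have hti := hlamt_pos i (hmemk i hi)
    have hpos : 0 < lam i - ‖E‖ := by
      have := hlami i hi; linarith
    have hsplit : (∑ j, (lam j / lamt i) * (ut i ⬝ᵥ u j) ^ 2)
        = (lam i / lamt i) * (ut i ⬝ᵥ u i) ^ 2
          + ∑ j ∈ Finset.univ.filter (fun j : Fin p => j ≠ i),
              (lam j / lamt i) * (ut i ⬝ᵥ u j) ^ 2 := by
      rw [Finset.filter_ne', ← Finset.add_sum_erase _ _ (Finset.mem_univ i)]
    rw [hsplit]
    refine add_le_add_left ?_ _
    refine mul_le_mul_of_nonneg_right ?_ (sq_nonneg _)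
    exact div_le_div_of_nonneg_left (hlam_nonneg i) hpos (hW2 i hi)
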